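/- Let N < M′ be positive integers, c₁ > 0, c₂ > 0, ρₓ ≥ 0, ρᵤ ≥ 0, γ > 0, and 0 < x_L < x_R < π. For n ≥ 1 put ωₙ = n², ζₙ = (c₁ωₙ⁻¹ + c₂ωₙ)/2, bₙ = n√(2/π)(cos(n x_R) − cos(n x_L)). Define Ω = diag(ω₁,…,ω_N), the 2N×2N matrix A = [[0_N, I_N],[−Ω², −(c₁I_N + c₂Ω²)]], B = (0,…,0,b₁,…,b_N)ᵀ ∈ ℝ^{2N}, E = [0_N; I_N] ∈ ℝ^{2N×N}, and Q = diag(1+ρₓω₁²,…,1+ρₓω_N², 0,…,0) ∈ ℝ^{2N×2N}. Assume: (i) there is ρ_∞ > 0 and a symmetric positive definite P ∈ ℝ^{2N×2N} satisfying PA + AᵀP − P(B R⁻¹ Bᵀ − γ⁻² E Eᵀ)P + Q = 0 with R := ρᵤ + ρ_∞; (ii) for each n with N < n ≤ M′ there are ρₙ > 0 and a symmetric positive definite Pₙ ∈ ℝ^{2×2} satisfying Pₙ Aₙ + Aₙᵀ Pₙ + γ⁻² Pₙ [[0,0],[0, 1 + γ² bₙ²/ρₙ]] Pₙ + [[1+ρₓωₙ²,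 0],[0, 0]] = 0, where Aₙ = [[0,1],[−ωₙ², −2ζₙωₙ]]; (iii) Σ_{n=N+1}^{M′} ρₙ ≤ ρ_∞. Let w₁,…,w_{M′} : [0,∞) → ℝ be continuous and let z₁,…,z_{M′} : [0,∞) → ℝ be twice continuously differentiable with zₙ(0) = zₙ'(0) = 0 and z̈ₙ(t) + 2ζₙωₙ żₙ(t) + ωₙ² zₙ(t) = bₙ u(t) + wₙ(t), where u(t) := −R⁻¹ Bᵀ P z^N(t) and z^N(t) := (z₁(t),…,z_N(t), ż₁(t),…,ż_N(t))ᵀ. Then for every T ≥ 0, ∫₀ᵀ [ Σ_{n=1}^{M′} (1+ρₓωₙ²) zₙ(t)² + ρᵤ u(t)² − γ² Σ_{n=1}^{M′} wₙ(t)² ] dt ≤ 0. -/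

import Mathlib

open Matrix Set

set_option maxHeartbeats 1000000 in
/-- Core of Theorem 1 (spillover-free H∞ design) for a finite modal
truncation of the Euler–Bernoulli beam: the feedback designed from the
Riccati equation with control weight ρᵤ + ρ_∞ renders the H∞ cost with the
original weight ρᵤ nonpositive, where ρ_∞ dominates the residual-mode
L² gains certified by the per-mode bounded-real-lemma Riccati equations. -/
theorem stmt_3 (N M' : ℕ) (hN : 0 < N) (hNM : N < M')
    (c₁ c₂ : ℝ) (hc₁ : 0 < c₁) (hc₂ : 0 < c₂)
    (ρx ρu : ℝ) (hρx : 0 ≤ ρx) (hρu : 0 ≤ ρu)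
    (γ : ℝ) (hγ : 0 < γ)
    (xL xR : ℝ) (hxL : 0 < xL) (hLR : xL < xR) (hxR : xR < Real.pi)
    (ω ζ b : ℕ → ℝ)
    (hω : ∀ n, ω n = (n : ℝ) ^ 2)
    (hζ : ∀ n, ζ n = (c₁ * (ω n)⁻¹ + c₂ * ω n) / 2)
    (hb : ∀ n, b n = (n : ℝ) * Real.sqrt (2 / Real.pi) *
      (Real.cos (n * xR) - Real.cos (n * xL)))
    (A : Matrix (Fin N ⊕ Fin N) (Fin N ⊕ Fin N) ℝ)
    (hA : A = Matrix.fromBlocks 0 1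
      (-(Matrix.diagonal fun i : Fin N => (ω ((i : ℕ) + 1)) ^ 2))
      (-(c₁ • (1 : Matrix (Fin N) (Fin N) ℝ)
         + c₂ • Matrix.diagonal fun i : Fin N => (ω ((i : ℕ) + 1)) ^ 2)))
    (B : (Fin N ⊕ Fin N) → ℝ)
    (hB : B = Sum.elim (fun _ => (0 : ℝ)) (fun i : Fin N => b ((i : ℕ) + 1)))
    (E : Matrix (Fin N ⊕ Fin N) (Fin N) ℝ)
    (hE : E = Sum.elim (fun _ _ => (0 : ℝ)) (fun i j => if i = j then 1 else 0))
    (Q : Matrix (Fin N ⊕ Fin N) (Fin N ⊕ Fin N) ℝ)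
    (hQ : Q = Matrix.fromBlocks
      (Matrix.diagonal fun i : Fin N => 1 + ρx * (ω ((i : ℕ) + 1)) ^ 2) 0 0 0)
    -- (i) the design Riccati equation for the first N modes
    (ρinf : ℝ) (hρinf : 0 < ρinf) (R : ℝ) (hRdef : R = ρu + ρinf)
    (P : Matrix (Fin N ⊕ Fin N) (Fin N ⊕ Fin N) ℝ) (hPsymm : P.IsSymm) (hP : P.PosDef)
    (hARE : P * A + Aᵀ * P
      - P * (R⁻¹ • Matrix.vecMulVec B B - (γ ^ 2)⁻¹ • (E * Eᵀ)) * P + Q = 0)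
    -- (ii) the per-mode bounded-real-lemma Riccati equations for the residue
    (ρ : ℕ → ℝ) (Pn : ℕ → Matrix (Fin 2) (Fin 2) ℝ)
    (hresidue : ∀ n, N < n → n ≤ M' → 0 < ρ n ∧ (Pn n).IsSymm ∧ (Pn n).PosDef ∧
      Pn n * !![0, 1; -(ω n) ^ 2, -(2 * ζ n * ω n)]
      + (!![0, 1; -(ω n) ^ 2, -(2 * ζ n * ω n)])ᵀ * Pn n
      + (γ ^ 2)⁻¹ • (Pn n * !![0, 0; 0, 1 + γ ^ 2 * (b n) ^ 2 / ρ n] * Pn n)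
      + !![1 + ρx * (ω n) ^ 2, 0; 0, 0] = 0)
    -- (iii) ρ_∞ dominates the sum of the residual gains
    (hsum : ∑ n ∈ Finset.Ioc N M', ρ n ≤ ρinf)
    -- the closed-loop truncated modal dynamics
    (w : ℕ → ℝ → ℝ) (hw : ∀ n ∈ Finset.Icc 1 M', ContinuousOn (w n) (Ici 0))
    (z z' z'' : ℕ → ℝ → ℝ)
    (zN : ℝ → (Fin N ⊕ Fin N) → ℝ)
    (hzN : ∀ t, zN t = Sum.elim (fun i : Fin N => z ((i : ℕ) + 1) t) (fun i : Fin N => z' ((i : ℕ) + 1) t))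
    (u : ℝ → ℝ)
    (hu : ∀ t, u t = -(R⁻¹ * (B ⬝ᵥ P.mulVec (zN t))))
    (hzero : ∀ n ∈ Finset.Icc 1 M', z n 0 = 0 ∧ z' n 0 = 0)
    (hz : ∀ n ∈ Finset.Icc 1 M', ∀ t ∈ Ici (0 : ℝ),
      HasDerivWithinAt (z n) (z' n t) (Ici 0) t)
    (hz' : ∀ n ∈ Finset.Icc 1 M', ∀ t ∈ Ici (0 : ℝ),
      HasDerivWithinAt (z' n) (z'' n t) (Ici 0) t)
    (hz'' : ∀ n ∈ Finset.Icc 1 M', ContinuousOn (z'' n) (Ici 0))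
    (hode : ∀ n ∈ Finset.Icc 1 M', ∀ t ∈ Ici (0 : ℝ),
      z'' n t + 2 * ζ n * ω n * z' n t + (ω n) ^ 2 * z n t = b n * u t + w n t) :
    ∀ T ≥ (0 : ℝ),
      ∫ t in (0 : ℝ)..T,
        ((∑ n ∈ Finset.Icc 1 M', (1 + ρx * (ω n) ^ 2) * (z n t) ^ 2)
          + ρu * (u t) ^ 2
          - γ ^ 2 * ∑ n ∈ Finset.Icc 1 M', (w n t) ^ 2) ≤ 0 := by
  classical
  have hR : (0:ℝ) < R := by rw [hRdef]; linarith
  have hγ2 : (0:ℝ) < γ ^ 2 := by positivity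
  have hmem : ∀ i : Fin N, (i:ℕ) + 1 ∈ Finset.Icc 1 M' := by
    intro i; have := i.2; simp only [Finset.mem_Icc]; omega
  have hIocsub : Finset.Ioc N M' ⊆ Finset.Icc 1 M' := by
    intro n hn; simp only [Finset.mem_Ioc] at hn; simp only [Finset.mem_Icc]; omega
  have hdamp : ∀ n : ℕ, 1 ≤ n → 2 * ζ n * ω n = c₁ + c₂ * (ω n) ^ 2 := by
    intro n hn
    have h0 : ((n:ℝ)) ≠ 0 := Nat.cast_ne_zero.mpr (by omega)
    rw [hζ n, hω n]
    field_simp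
  -- continuity of basic pieces
  have hznc : ∀ n ∈ Finset.Icc 1 M', ContinuousOn (z n) (Ici 0) :=
    fun n hn t ht => (hz n hn t ht).continuousWithinAt
  have hz'nc : ∀ n ∈ Finset.Icc 1 M', ContinuousOn (z' n) (Ici 0) :=
    fun n hn t ht => (hz' n hn t ht).continuousWithinAt
  -- the velocity vector
  set Zd : ℝ → (Fin N ⊕ Fin N) → ℝ :=
    fun t => Sum.elim (fun i : Fin N => z' ((i:ℕ)+1) t) (fun i : Fin N => z'' ((i:ℕ)+1) t)
    with hZd
  have hzNd : ∀ i, ∀ t ∈ Ici (0:ℝ), HasDerivWithinAt (fun s => zN s i) (Zd t i) (Ici 0) t := by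
    intro i t ht
    cases i with
    | inl i =>
      have h1 : (fun s => zN s (Sum.inl i)) = fun s => z ((i:ℕ)+1) s := by
        funext s; rw [hzN]; rfl
      rw [h1]
      simpa [hZd] using hz _ (hmem i) t ht
    | inr i =>
      have h1 : (fun s => zN s (Sum.inr i)) = fun s => z' ((i:ℕ)+1) s := by
        funext s; rw [hzN]; rfl
      rw [h1]
      simpa [hZd] using hz' _ (hmem i) t ht
  have hzNc : ∀ i, ContinuousOn (fun s => zN s i) (Ici 0) :=
    fun i t ht => (hzNd i t ht).continuousWithinAt
  have hZdc : ∀ i, ContinuousOn (fun s => Zd s i) (Ici 0) := by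
    intro i
    cases i with
    | inl i => simpa [hZd] using hz'nc _ (hmem i)
    | inr i => simpa [hZd] using hz'' _ (hmem i)
  -- vector form of the ODE
  have hODEvec : ∀ t ∈ Ici (0:ℝ),
      Zd t = A *ᵥ zN t + u t • B + E *ᵥ (fun i : Fin N => w ((i:ℕ)+1) t) := by
    intro t ht
    funext i
    cases i with
    | inl i =>
      simp only [hZd, Sum.elim_inl, Pi.add_apply, Pi.smul_apply, smul_eq_mul]
      rw [hA, hzN, Matrix.fromBlocks_mulVec]
      simp [hB, hE, Matrix.mulVec, dotProduct]
    | inr i =>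
      have hoden := hode ((i:ℕ)+1) (hmem i) t ht
      have hd := hdamp ((i:ℕ)+1) (by omega)
      rw [hd] at hoden
      simp only [hZd, Sum.elim_inr, Pi.add_apply, Pi.smul_apply, smul_eq_mul]
      rw [hA, hzN, Matrix.fromBlocks_mulVec]
      simp only [Sum.elim_inr, Pi.add_apply, Matrix.neg_mulVec, Matrix.add_mulVec,
        Matrix.smul_mulVec, Matrix.mulVec_diagonal, Pi.neg_apply, Pi.smul_apply,
        Matrix.one_mulVec, smul_eq_mul, hB, hE, Sum.elim_comp_inl, Sum.elim_comp_inr]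
      have hEi : ((Sum.elim (fun _ _ => (0:ℝ)) (fun i j => if i = j then 1 else 0) :
          Matrix (Fin N ⊕ Fin N) (Fin N) ℝ) *ᵥ (fun i : Fin N => w ((i:ℕ)+1) t)) (Sum.inr i)
          = w ((i:ℕ)+1) t := by
        simp [Matrix.mulVec, dotProduct]
      rw [hEi]
      linear_combination hoden
  -- symmetric quadratic form helpers
  have hsymdot : ∀ x y : (Fin N ⊕ Fin N) → ℝ, x ⬝ᵥ P *ᵥ y = y ⬝ᵥ P *ᵥ x := by
    intro x y
    rw [Matrix.dotProduct_mulVec, ← Matrix.vecMul_transpose, hPsymm.eq, dotProduct_comm]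
  have hAdot : ∀ (M : Matrix (Fin N ⊕ Fin N) (Fin N ⊕ Fin N) ℝ) (x y : (Fin N ⊕ Fin N) → ℝ),
      (M *ᵥ x) ⬝ᵥ (P *ᵥ y) = x ⬝ᵥ ((Mᵀ * P) *ᵥ y) := by
    intro M x y
    rw [← Matrix.mulVec_mulVec, Matrix.dotProduct_mulVec x, Matrix.vecMul_transpose]
  -- first-block storage function and its derivative
  set v1 : ℝ → ℝ := fun t => zN t ⬝ᵥ P *ᵥ zN t with hv1
  set d1 : ℝ → ℝ := fun t => Zd t ⬝ᵥ P *ᵥ zN t + zN t ⬝ᵥ P *ᵥ Zd t with hd1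
  have hv1deriv : ∀ t ∈ Ici (0:ℝ), HasDerivWithinAt v1 (d1 t) (Ici 0) t := by
    intro t ht
    have hfun : v1 = fun s => ∑ i, zN s i * (∑ j, P i j * zN s j) := by
      funext s; simp [hv1, dotProduct, Matrix.mulVec]
    have hval : d1 t = ∑ i, (Zd t i * (∑ j, P i j * zN t j)
        + zN t i * (∑ j, P i j * Zd t j)) := by
      simp [hd1, dotProduct, Matrix.mulVec, Finset.sum_add_distrib]
    rw [hfun, hval]
    exact HasDerivWithinAt.fun_sum fun i _ =>
      (hzNd i t ht).mul (HasDerivWithinAt.fun_sum fun j _ => (hzNd j t ht).const_mul _)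
  have hv1c : ContinuousOn v1 (Ici 0) := by
    have hfun : v1 = fun s => ∑ i, zN s i * (∑ j, P i j * zN s j) := by
      funext s; simp [hv1, dotProduct, Matrix.mulVec]
    rw [hfun]
    exact continuousOn_finset_sum _ fun i _ =>
      (hzNc i).mul (continuousOn_finset_sum _ fun j _ => continuousOn_const.mul (hzNc j))
  have hd1c : ContinuousOn d1 (Ici 0) := by
    have hfun : d1 = fun s => (∑ i, Zd s i * (∑ j, P i j * zN s j))
        + ∑ i, zN s i * (∑ j, P i j * Zd s j) := by
      funext s; simp [hd1, dotProduct, Matrix.mulVec]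
    rw [hfun]
    exact (continuousOn_finset_sum _ fun i _ =>
        (hZdc i).mul (continuousOn_finset_sum _ fun j _ => continuousOn_const.mul (hzNc j))).add
      (continuousOn_finset_sum _ fun i _ =>
        (hzNc i).mul (continuousOn_finset_sum _ fun j _ => continuousOn_const.mul (hZdc j)))
  -- key dissipation inequality for the first N modes
  have key1 : ∀ t ∈ Ici (0:ℝ), d1 t ≤
      -(∑ i : Fin N, (1 + ρx * (ω ((i:ℕ)+1)) ^ 2) * (z ((i:ℕ)+1) t) ^ 2)
      - R * (u t) ^ 2 + γ ^ 2 * ∑ i : Fin N, (w ((i:ℕ)+1) t) ^ 2 := by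
    intro t ht
    set wv : Fin N → ℝ := fun i => w ((i:ℕ)+1) t with hwv
    have hus : u t = -(R⁻¹ * (B ⬝ᵥ P *ᵥ zN t)) := hu t
    set s : ℝ := B ⬝ᵥ P *ᵥ zN t with hs
    set g : Fin N → ℝ := fun i => (P *ᵥ zN t) (Sum.inr i) with hg
    have hEv : (Eᵀ *ᵥ (P *ᵥ zN t)) = g := by
      funext i
      rw [hE]
      simp [Matrix.mulVec, dotProduct, Matrix.transpose, Fintype.sum_sum_type, hg]
    have hEterm : (E *ᵥ wv) ⬝ᵥ (P *ᵥ zN t) = ∑ i, g i * wv i := by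
      rw [dotProduct_comm, Matrix.dotProduct_mulVec (P *ᵥ zN t), ← Matrix.mulVec_transpose,
        hEv]
      rfl
    have hEterm2 : zN t ⬝ᵥ P *ᵥ (E *ᵥ wv) = ∑ i, g i * wv i := by
      rw [hsymdot]; exact hEterm
    have hBterm2 : zN t ⬝ᵥ P *ᵥ B = s := by rw [hsymdot]
    have hAterm : (A *ᵥ zN t) ⬝ᵥ (P *ᵥ zN t) = zN t ⬝ᵥ ((Aᵀ * P) *ᵥ zN t) := hAdot A _ _
    have hAterm2 : zN t ⬝ᵥ P *ᵥ (A *ᵥ zN t) = zN t ⬝ᵥ ((P * A) *ᵥ zN t) := by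
      rw [Matrix.mulVec_mulVec]
    have hd1exp : d1 t = zN t ⬝ᵥ ((P * A + Aᵀ * P) *ᵥ zN t) + 2 * u t * s
        + 2 * ∑ i, g i * wv i := by
      simp only [hd1]
      rw [hODEvec t ht]
      simp only [← hwv]
      simp only [add_dotProduct, dotProduct_add, smul_dotProduct,
        dotProduct_smul, Matrix.mulVec_add, Matrix.mulVec_smul, smul_eq_mul]
      rw [hAterm, hAterm2, hEterm, hEterm2, hBterm2, ← hs, Matrix.add_mulVec,
        dotProduct_add]
      ring
    have hMA : P * A + Aᵀ * P
        = P * (R⁻¹ • Matrix.vecMulVec B B - (γ ^ 2)⁻¹ • (E * Eᵀ)) * P - Q := by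
      linear_combination (norm := abel) hARE
    have hvecBB : ∀ y, Matrix.vecMulVec B B *ᵥ y = (B ⬝ᵥ y) • B := by
      intro y
      funext i
      simp only [Matrix.mulVec, Matrix.vecMulVec_apply, dotProduct, Pi.smul_apply,
        smul_eq_mul]
      rw [Finset.sum_mul]
      exact Finset.sum_congr rfl (fun j _ => by ring)
    have hEg : zN t ⬝ᵥ P *ᵥ (E *ᵥ g) = ∑ i, g i ^ 2 := by
      rw [hsymdot, dotProduct_comm, Matrix.dotProduct_mulVec (P *ᵥ zN t),
        ← Matrix.mulVec_transpose, hEv]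
      simp [dotProduct, sq]
    have hmid : zN t ⬝ᵥ ((P * (R⁻¹ • Matrix.vecMulVec B B - (γ ^ 2)⁻¹ • (E * Eᵀ)) * P) *ᵥ zN t)
        = R⁻¹ * s ^ 2 - (γ ^ 2)⁻¹ * ∑ i, g i ^ 2 := by
      rw [← Matrix.mulVec_mulVec, ← Matrix.mulVec_mulVec, Matrix.sub_mulVec,
        Matrix.smul_mulVec, Matrix.smul_mulVec, hvecBB, ← hs,
        ← Matrix.mulVec_mulVec, hEv, Matrix.mulVec_sub, Matrix.mulVec_smul,
        Matrix.mulVec_smul, Matrix.mulVec_smul, dotProduct_sub, dotProduct_smul,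
        dotProduct_smul, dotProduct_smul, hBterm2, hEg]
      simp only [smul_eq_mul]
      ring
    have hQv : zN t ⬝ᵥ (Q *ᵥ zN t)
        = ∑ i : Fin N, (1 + ρx * (ω ((i:ℕ)+1)) ^ 2) * (z ((i:ℕ)+1) t) ^ 2 := by
      rw [hQ, hzN t, Matrix.fromBlocks_mulVec]
      simp only [dotProduct, Fintype.sum_sum_type, Matrix.mulVec_diagonal,
        Matrix.zero_mulVec, Pi.add_apply, Pi.zero_apply, add_zero, Sum.elim_inl, Sum.elim_inr,
        Sum.elim_comp_inl, Sum.elim_comp_inr, zero_add, mul_zero, Finset.sum_const_zero]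
      exact Finset.sum_congr rfl fun i _ => by ring
    have hsu : s = -(R * u t) := by rw [hus]; field_simp
    have hszero : R⁻¹ * s ^ 2 + 2 * u t * s + R * (u t) ^ 2 = 0 := by
      rw [hsu]; field_simp; ring
    have hsumIneq : 2 * ∑ i, g i * wv i
        ≤ (γ ^ 2)⁻¹ * ∑ i, g i ^ 2 + γ ^ 2 * ∑ i : Fin N, (w ((i:ℕ)+1) t) ^ 2 := by
      rw [Finset.mul_sum, Finset.mul_sum, Finset.mul_sum, ← Finset.sum_add_distrib]
      refine Finset.sum_le_sum fun i _ => ?_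
      have hexp : (γ ^ 2)⁻¹ * (g i - γ ^ 2 * wv i) ^ 2
          = (γ ^ 2)⁻¹ * g i ^ 2 - 2 * (g i * wv i) + γ ^ 2 * wv i ^ 2 := by
        field_simp; ring
      have h0 : 0 ≤ (γ ^ 2)⁻¹ * (g i - γ ^ 2 * wv i) ^ 2 := by positivity
      rw [hexp] at h0
      linarith
    rw [hd1exp, hMA, Matrix.sub_mulVec, dotProduct_sub, hmid, hQv]
    linarith
  -- residual-mode storage functions
  set Vres : ℕ → ℝ → ℝ := fun n t => Pn n 0 0 * (z n t * z n t)
      + 2 * Pn n 0 1 * (z n t * z' n t) + Pn n 1 1 * (z' n t * z' n t) with hVres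
  set Dres : ℕ → ℝ → ℝ := fun n t => Pn n 0 0 * (z' n t * z n t + z n t * z' n t)
      + 2 * Pn n 0 1 * (z' n t * z' n t + z n t * z'' n t)
      + Pn n 1 1 * (z'' n t * z' n t + z' n t * z'' n t) with hDres
  have hVresderiv : ∀ n ∈ Finset.Ioc N M', ∀ t ∈ Ici (0:ℝ),
      HasDerivWithinAt (Vres n) (Dres n t) (Ici 0) t := by
    intro n hn t ht
    have h1 := hz n (hIocsub hn) t ht
    have h2 := hz' n (hIocsub hn) t ht
    simp only [hVres, hDres]
    exact (((h1.mul h1).const_mul _).add ((h1.mul h2).const_mul _)).add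
      ((h2.mul h2).const_mul _)
  have key2 : ∀ n ∈ Finset.Ioc N M', ∀ t ∈ Ici (0:ℝ),
      Dres n t ≤ -((1 + ρx * (ω n) ^ 2) * (z n t) ^ 2) + ρ n * (u t) ^ 2
        + γ ^ 2 * (w n t) ^ 2 := by
    intro n hn t ht
    have hnIcc := hIocsub hn
    simp only [Finset.mem_Ioc] at hn
    obtain ⟨hρn, hPsn, hPdn, hric⟩ := hresidue n hn.1 hn.2
    have hq := hPsn.apply 0 1
    have hoden := hode n hnIcc t ht
    have e00 := congrFun (congrFun hric 0) 0
    have e01 := congrFun (congrFun hric 0) 1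
    have e11 := congrFun (congrFun hric 1) 1
    simp [Matrix.mul_apply, Fin.sum_univ_two, Matrix.add_apply, Matrix.smul_apply,
      Matrix.transpose_apply, Matrix.vecHead, Matrix.vecTail, smul_eq_mul] at e00 e01 e11
    have hzdd : z'' n t = b n * u t + w n t - 2 * ζ n * ω n * z' n t - ω n ^ 2 * z n t := by
      linarith [hoden]
    have hk : (γ ^ 2)⁻¹ * (1 + γ ^ 2 * b n ^ 2 / ρ n) = (γ ^ 2)⁻¹ + b n ^ 2 / ρ n := by
      field_simp
    have hkey : Dres n t
        = -(((γ ^ 2)⁻¹ * (1 + γ ^ 2 * b n ^ 2 / ρ n))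
              * (Pn n 0 1 * z n t + Pn n 1 1 * z' n t) ^ 2)
          - (1 + ρx * ω n ^ 2) * z n t ^ 2
          + 2 * (Pn n 0 1 * z n t + Pn n 1 1 * z' n t) * (b n * u t + w n t) := by
      simp only [hDres]
      rw [hzdd]
      linear_combination (z n t) ^ 2 * e00 + 2 * z n t * z' n t * e01 + (z' n t) ^ 2 * e11
        + ((z n t) ^ 2 * (ω n ^ 2 - (γ ^ 2)⁻¹ * ((1 + γ ^ 2 * b n ^ 2 / ρ n) * Pn n 0 1))
            - (z' n t) ^ 2) * hq
    set sn := Pn n 0 1 * z n t + Pn n 1 1 * z' n t with hsn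
    have hA1exp : (γ ^ 2)⁻¹ * (sn - γ ^ 2 * w n t) ^ 2
        = (γ ^ 2)⁻¹ * sn ^ 2 - 2 * sn * w n t + γ ^ 2 * w n t ^ 2 := by field_simp; ring
    have hA1 : 0 ≤ (γ ^ 2)⁻¹ * (sn - γ ^ 2 * w n t) ^ 2 := by positivity
    have hA2exp : (ρ n)⁻¹ * (b n * sn - ρ n * u t) ^ 2
        = b n ^ 2 / ρ n * sn ^ 2 - 2 * b n * sn * u t + ρ n * u t ^ 2 := by field_simp; ring
    have hA2 : 0 ≤ (ρ n)⁻¹ * (b n * sn - ρ n * u t) ^ 2 := by positivity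
    rw [hkey, hk]
    rw [hA1exp] at hA1
    rw [hA2exp] at hA2
    nlinarith [hA1, hA2]
  -- total storage function
  set VV : ℝ → ℝ := fun t => v1 t + ∑ n ∈ Finset.Ioc N M', Vres n t with hVV
  set DVt : ℝ → ℝ := fun t => d1 t + ∑ n ∈ Finset.Ioc N M', Dres n t with hDVt
  have hVVderiv : ∀ t ∈ Ici (0:ℝ), HasDerivWithinAt VV (DVt t) (Ici 0) t := by
    intro t ht
    simp only [hVV, hDVt]
    exact (hv1deriv t ht).add (HasDerivWithinAt.fun_sum fun n hn => hVresderiv n hn t ht)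
  have hDVc : ContinuousOn DVt (Ici 0) := by
    simp only [hDVt]
    refine hd1c.add (continuousOn_finset_sum _ fun n hn => ?_)
    have h1 := hznc n (hIocsub hn)
    have h2 := hz'nc n (hIocsub hn)
    have h3 := hz'' n (hIocsub hn)
    simp only [hDres]
    exact ((continuousOn_const.mul ((h2.mul h1).add (h1.mul h2))).add
      (continuousOn_const.mul ((h2.mul h2).add (h1.mul h3)))).add
      (continuousOn_const.mul ((h3.mul h2).add (h2.mul h3)))
  have huc : ContinuousOn u (Ici 0) := by
    have hfun : u = fun t => -(R⁻¹ * ∑ i, B i * ∑ j, P i j * zN t j) := by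
      funext t; rw [hu t]; simp [dotProduct, Matrix.mulVec]
    rw [hfun]
    exact (continuousOn_const.mul (continuousOn_finset_sum _ fun i _ =>
      continuousOn_const.mul (continuousOn_finset_sum _ fun j _ =>
        continuousOn_const.mul (hzNc j)))).neg
  have hIIc : ContinuousOn (fun t => (∑ n ∈ Finset.Icc 1 M', (1 + ρx * (ω n) ^ 2) * (z n t) ^ 2)
      + ρu * (u t) ^ 2 - γ ^ 2 * ∑ n ∈ Finset.Icc 1 M', (w n t) ^ 2) (Ici 0) := by
    refine ContinuousOn.sub (ContinuousOn.add (continuousOn_finset_sum _ fun n hn =>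
      continuousOn_const.mul ((hznc n hn).pow 2)) (continuousOn_const.mul (huc.pow 2)))
      (continuousOn_const.mul (continuousOn_finset_sum _ fun n hn => ((hw n hn).pow 2)))
  -- sum splitting
  have hfinId : ∀ f : ℕ → ℝ, ∑ n ∈ Finset.Icc 1 N, f n = ∑ i : Fin N, f ((i:ℕ)+1) := by
    intro f
    rw [← Finset.Ico_add_one_right_eq_Icc, Finset.sum_Ico_eq_sum_range]
    rw [← Fin.sum_univ_eq_sum_range (fun i => f (1+i))]
    simp [add_comm]
  have hsplit : ∀ f : ℕ → ℝ, ∑ n ∈ Finset.Icc 1 M', f n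
      = (∑ i : Fin N, f ((i:ℕ)+1)) + ∑ n ∈ Finset.Ioc N M', f n := by
    intro f
    have hun : Finset.Icc 1 N ∪ Finset.Ioc N M' = Finset.Icc 1 M' := by
      ext x; simp only [Finset.mem_union, Finset.mem_Icc, Finset.mem_Ioc]; omega
    have hdisj : Disjoint (Finset.Icc 1 N) (Finset.Ioc N M') := by
      rw [Finset.disjoint_left]
      intro a ha hb
      simp only [Finset.mem_Icc] at ha
      simp only [Finset.mem_Ioc] at hb
      omega
    rw [← hfinId, ← hun, Finset.sum_union hdisj]
  -- pointwise dissipation inequality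
  have hIle : ∀ t ∈ Ici (0:ℝ),
      (∑ n ∈ Finset.Icc 1 M', (1 + ρx * (ω n) ^ 2) * (z n t) ^ 2)
        + ρu * (u t) ^ 2 - γ ^ 2 * ∑ n ∈ Finset.Icc 1 M', (w n t) ^ 2 ≤ -DVt t := by
    intro t ht
    have h1 := key1 t ht
    have h2 : ∑ n ∈ Finset.Ioc N M', Dres n t
        ≤ ∑ n ∈ Finset.Ioc N M',
            (-((1 + ρx * (ω n) ^ 2) * (z n t) ^ 2) + ρ n * (u t) ^ 2 + γ ^ 2 * (w n t) ^ 2) :=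
      Finset.sum_le_sum fun n hn => key2 n hn t ht
    have h3 : ∑ n ∈ Finset.Ioc N M',
          (-((1 + ρx * (ω n) ^ 2) * (z n t) ^ 2) + ρ n * (u t) ^ 2 + γ ^ 2 * (w n t) ^ 2)
        = -(∑ n ∈ Finset.Ioc N M', (1 + ρx * (ω n) ^ 2) * (z n t) ^ 2)
          + (∑ n ∈ Finset.Ioc N M', ρ n) * (u t) ^ 2
          + γ ^ 2 * ∑ n ∈ Finset.Ioc N M', (w n t) ^ 2 := by
      rw [Finset.sum_add_distrib, Finset.sum_add_distrib, ← Finset.sum_neg_distrib,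
        ← Finset.sum_mul, ← Finset.mul_sum]
    have h4 : (∑ n ∈ Finset.Ioc N M', ρ n) * (u t) ^ 2 ≤ ρinf * (u t) ^ 2 :=
      mul_le_mul_of_nonneg_right hsum (sq_nonneg _)
    have h5 : R * (u t) ^ 2 = ρu * (u t) ^ 2 + ρinf * (u t) ^ 2 := by rw [hRdef]; ring
    rw [hsplit (fun n => (1 + ρx * (ω n) ^ 2) * (z n t) ^ 2), hsplit (fun n => (w n t) ^ 2)]
    simp only [hDVt]
    linarith [h1, h2, h3, h4]
  -- evaluation at 0 and nonnegativity
  have hzN0 : zN 0 = 0 := by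
    funext i
    rw [hzN]
    cases i with
    | inl i => simpa using (hzero _ (hmem i)).1
    | inr i => simpa using (hzero _ (hmem i)).2
  have hVV0 : VV 0 = 0 := by
    simp only [hVV]
    have h1 : v1 0 = 0 := by simp only [hv1]; rw [hzN0]; simp
    have h2 : ∑ n ∈ Finset.Ioc N M', Vres n 0 = 0 := by
      refine Finset.sum_eq_zero fun n hn => ?_
      simp only [hVres]
      rw [(hzero n (hIocsub hn)).1, (hzero n (hIocsub hn)).2]
      ring
    rw [h1, h2, add_zero]
  have hVVnn : ∀ T, 0 ≤ VV T := by
    intro T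
    simp only [hVV]
    have h1 : 0 ≤ v1 T := by
      have := hP.posSemidef.dotProduct_mulVec_nonneg (zN T)
      simpa [hv1] using this
    have h2 : 0 ≤ ∑ n ∈ Finset.Ioc N M', Vres n T := by
      refine Finset.sum_nonneg fun n hn => ?_
      simp only [Finset.mem_Ioc] at hn
      obtain ⟨hρn, hPsn, hPdn, hric⟩ := hresidue n hn.1 hn.2
      have hq := hPsn.apply 0 1
      have h := hPdn.posSemidef.dotProduct_mulVec_nonneg ![z n T, z' n T]
      simp [dotProduct, Matrix.mulVec, Fin.sum_univ_two] at h
      rw [hq] at h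
      simp only [hVres]
      nlinarith [h]
    linarith
  -- integrate
  intro T hT
  have hsubIcc : Icc (0:ℝ) T ⊆ Ici 0 := fun x hx => hx.1
  have hVVc : ContinuousOn VV (Icc 0 T) :=
    fun x hx => ((hVVderiv x (hsubIcc hx)).continuousWithinAt).mono hsubIcc
  have hDVint : IntervalIntegrable DVt MeasureTheory.volume 0 T :=
    (hDVc.mono hsubIcc).intervalIntegrable_of_Icc hT
  have hIIint : IntervalIntegrable (fun t =>
      (∑ n ∈ Finset.Icc 1 M', (1 + ρx * (ω n) ^ 2) * (z n t) ^ 2)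
        + ρu * (u t) ^ 2 - γ ^ 2 * ∑ n ∈ Finset.Icc 1 M', (w n t) ^ 2)
      MeasureTheory.volume 0 T :=
    (hIIc.mono hsubIcc).intervalIntegrable_of_Icc hT
  have hFTC : ∫ t in (0:ℝ)..T, DVt t = VV T - VV 0 :=
    intervalIntegral.integral_eq_sub_of_hasDeriv_right_of_le hT hVVc
      (fun x hx => (hVVderiv x (le_of_lt hx.1)).mono
        (fun y hy => le_trans hx.1.le (le_of_lt hy)))
      hDVint
  have hmono : (∫ t in (0:ℝ)..T,
      ((∑ n ∈ Finset.Icc 1 M', (1 + ρx * (ω n) ^ 2) * (z n t) ^ 2)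
        + ρu * (u t) ^ 2 - γ ^ 2 * ∑ n ∈ Finset.Icc 1 M', (w n t) ^ 2))
      ≤ ∫ t in (0:ℝ)..T, -DVt t :=
    intervalIntegral.integral_mono_on hT hIIint hDVint.neg (fun x hx => hIle x (hsubIcc hx))
  have hneg : ∫ t in (0:ℝ)..T, -DVt t = -(VV T - VV 0) := by
    rw [intervalIntegral.integral_neg, hFTC]
  have hfin := hVVnn T
  linarith [hmono]
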